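/- Let I be a group of the form Z_2 ⋉ (Z_n × Z_m), where the generator of Z_2 acts on the abelian normal subgroup A = Z_n × Z_m by inverting every element. Then every elementary abelian 2-subgroup of I has rank at most 3. -/

import Mathlib

/-- An automorphism of order dividing 2 gives a homomorphism
`Multiplicative (ZMod 2) →* MulAut A`. -/
noncomputable def zmod2Hom {A : Type*} [Group A] (σ : MulAut A) (hσ : σ * σ = 1) :
    Multiplicative (ZMod 2) →* MulAut A :=
  AddMonoidHom.toMultiplicativeLeft
    (ZMod.lift 2 ⟨zmultiplesHom (Additive (MulAut A)) (Additive.ofMul σ), by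
      simp [zmultiplesHom]
      rw [two_zsmul]
      exact_mod_cast congrArg Additive.ofMul hσ⟩)

/-- The action of `ZMod 2` on an abelian group `A` where the nontrivial element acts by
sending each element to its inverse. -/
noncomputable def invAction (A : Type*) [CommGroup A] :
    Multiplicative (ZMod 2) →* MulAut A :=
  zmod2Hom (MulEquiv.inv A) (by ext x; simp)

/-- The semidirect product `Z_2 ⋉ (Z_n × Z_m)`, where the nontrivial element of `Z_2` acts
on the abelian normal subgroup `A = Z_n × Z_m` by sending each element to its inverse. -/
noncomputable abbrev InvSdp (n m : ℕ) :=
  SemidirectProduct (Multiplicative (ZMod n × ZMod m)) (Multiplicative (ZMod 2))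
    (invAction (Multiplicative (ZMod n × ZMod m)))

theorem tors_key (k : ℕ) (x : ZMod (k+1)) (hx : x + x = 0) (hx0 : x ≠ 0) :
    x.val + x.val = k + 1 := by
  have h2 : (x.val + x.val) % (k+1) = 0 := by
    have := congrArg ZMod.val hx
    rwa [ZMod.val_add, ZMod.val_zero] at this
  obtain ⟨c, hc⟩ := Nat.dvd_of_mod_eq_zero h2
  have hv : x.val < k + 1 := ZMod.val_lt _
  have h0 : x.val ≠ 0 := fun h0 => hx0 ((ZMod.val_eq_zero x).mp h0)
  have hlt : (k+1) * c < (k+1) * 2 := by omega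
  have hc2 : c < 2 := Nat.lt_of_mul_lt_mul_left hlt
  have hc0 : c ≠ 0 := by rintro rfl; omega
  have h1 : c = 1 := by omega
  rw [h1, mul_one] at hc
  omega

theorem tors (k : ℕ) : ∃ g : {a : ZMod k // a + a = 0} → Bool, Function.Injective g := by
  cases k with
  | zero =>
    refine ⟨fun _ => true, fun a b _ => ?_⟩
    have ha : a.1 = 0 := by
      have h : (show ℤ from a.1) + (show ℤ from a.1) = 0 := a.2
      have h0 : (show ℤ from a.1) = 0 := by omega
      exact h0
    have hb : b.1 = 0 := by
      have h : (show ℤ from b.1) + (show ℤ from b.1) = 0 := b.2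
      have h0 : (show ℤ from b.1) = 0 := by omega
      exact h0
    exact Subtype.ext (ha.trans hb.symm)
  | succ k =>
    refine ⟨fun a => decide (a.1 = 0), fun a b hab => ?_⟩
    simp only [decide_eq_decide] at hab
    by_cases h : a.1 = 0
    · exact Subtype.ext (h.trans (hab.mp h).symm)
    · have hb : ¬ b.1 = 0 := fun hb => h (hab.mpr hb)
      have ha2 := tors_key k a.1 a.2 h
      have hb2 := tors_key k b.1 b.2 hb
      exact Subtype.ext (ZMod.val_injective (k+1) (by omega))

theorem tors_card (k : ℕ) : Finite {a : ZMod k // a + a = 0} ∧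
    Nat.card {a : ZMod k // a + a = 0} ≤ 2 := by
  obtain ⟨g, hg⟩ := tors k
  refine ⟨Finite.of_injective g hg, ?_⟩
  calc Nat.card {a : ZMod k // a + a = 0} ≤ Nat.card Bool := Nat.card_le_card_of_injective g hg
  _ = 2 := by simp [Nat.card_eq_fintype_card]


/-- Every elementary abelian 2-subgroup of `I = Z_2 ⋉ (Z_n × Z_m)` (inversion action)
has rank at most 3, i.e. is finite of order at most `2^3 = 8`. -/
theorem elementary_abelian_subgroup_rank_le_three (n m : ℕ)
    (E : Subgroup (InvSdp n m)) (hE : ∀ x ∈ E, x * x = 1) :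
    Finite E ∧ Nat.card E ≤ 2 ^ 3 := by
  classical
  set f : E →* Multiplicative (ZMod 2) := SemidirectProduct.rightHom.comp E.subtype with hf
  -- elements of the kernel square to 1 in the abelian part
  have hsq : ∀ x : f.ker, (x.1.1.left.toAdd : ZMod n × ZMod m) + x.1.1.left.toAdd = 0 := by
    intro x
    have hr : x.1.1.right = 1 := x.2
    have h1 : x.1.1 * x.1.1 = 1 := hE x.1.1 x.1.2
    have h2 := congrArg SemidirectProduct.left h1
    rw [SemidirectProduct.mul_left, hr, map_one, MulAut.one_apply,
      SemidirectProduct.one_left] at h2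
    exact congrArg Multiplicative.toAdd h2
  let j : f.ker → {a : ZMod n // a + a = 0} × {a : ZMod m // a + a = 0} :=
    fun x => ⟨⟨x.1.1.left.toAdd.1, congrArg Prod.fst (hsq x)⟩,
      ⟨x.1.1.left.toAdd.2, congrArg Prod.snd (hsq x)⟩⟩
  have hj : Function.Injective j := by
    intro x y hxy
    have h1 : x.1.1.left.toAdd.1 = y.1.1.left.toAdd.1 := congrArg (fun p => p.1.1) hxy
    have h2 : x.1.1.left.toAdd.2 = y.1.1.left.toAdd.2 := congrArg (fun p => p.2.1) hxy
    have hl : x.1.1.left = y.1.1.left := Prod.ext h1 h2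
    have hr : x.1.1.right = y.1.1.right := x.2.trans (y.2 : _).symm
    exact Subtype.ext (Subtype.ext (SemidirectProduct.ext hl hr))
  haveI hfin1 : Finite {a : ZMod n // a + a = 0} := (tors_card n).1
  haveI hfin2 : Finite {a : ZMod m // a + a = 0} := (tors_card m).1
  haveI hKfin : Finite f.ker := Finite.of_injective j hj
  have hKcard : Nat.card f.ker ≤ 4 := by
    calc Nat.card f.ker ≤ Nat.card ({a : ZMod n // a + a = 0} × {a : ZMod m // a + a = 0}) :=
        Nat.card_le_card_of_injective j hj
    _ = Nat.card {a : ZMod n // a + a = 0} * Nat.card {a : ZMod m // a + a = 0} := Nat.card_prod _ _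
    _ ≤ 2 * 2 := Nat.mul_le_mul (tors_card n).2 (tors_card m).2
    _ = 4 := rfl
  have e2 : (E ⧸ f.ker) ≃* f.range := QuotientGroup.quotientKerEquivRange f
  haveI : Finite f.range := Subtype.finite
  haveI hQfin : Finite (E ⧸ f.ker) := Finite.of_equiv _ e2.symm.toEquiv
  have hQcard : Nat.card (E ⧸ f.ker) ≤ 2 := by
    rw [Nat.card_congr e2.toEquiv]
    calc Nat.card f.range ≤ Nat.card (Multiplicative (ZMod 2)) := Subgroup.card_le_card_group _
    _ = 2 := by simp [Nat.card_eq_fintype_card]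
  have e : (E : Type _) ≃ (E ⧸ f.ker) × f.ker := Subgroup.groupEquivQuotientProdSubgroup
  refine ⟨Finite.of_equiv _ e.symm, ?_⟩
  calc Nat.card E = Nat.card ((E ⧸ f.ker) × f.ker) := Nat.card_congr e
  _ = Nat.card (E ⧸ f.ker) * Nat.card f.ker := Nat.card_prod _ _
  _ ≤ 2 * 4 := Nat.mul_le_mul hQcard hKcard
  _ = 2 ^ 3 := rfl
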